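/- Let m ≥ 1, τ ∈ (0,1), and suppose (1−τ)m is a positive integer. Let U ∈ ℝ^{m×n} with rows u_iᵀ, y ∈ ℝ^m, x ∈ ℝ^n, ū = (1/m) Σ_{i=1}^m u_i, and ȳ = (1/m) Σ_{i=1}^m y_i. Then inf_{x₀ ∈ ℝ} (1/m) Σ_{i=1}^m ρ_τ(y_i − u_iᵀx − x₀) = (1−τ)·( xᵀū − ȳ + φ_τ(y − Ux) ). -/

import Mathlib

/-- Sample CVaR at level `β`. -/
noncomputable def cvar {m : ℕ} (β : ℝ) (z : Fin m → ℝ) : ℝ :=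
  ⨅ α : ℝ, α + (1 / ((1 - β) * m)) * ∑ i, max (z i - α) 0

/-- The tilted `ℓ₁` penalty `ρ_τ(z) = τ·max(z,0) + (1−τ)·max(−z,0)`. -/
def tiltedL1 (τ z : ℝ) : ℝ := τ * max z 0 + (1 - τ) * max (-z) 0

/-- Minimizing the quantile-regression objective over the intercept `x₀` yields
`(1−τ)·(xᵀū − ȳ + φ_τ(y − Ux))`. -/
theorem quantile_regression_cvar (m n : ℕ) (hm : 1 ≤ m) (τ : ℝ) (hτ0 : 0 < τ)
    (hτ1 : τ < 1) (k : ℕ) (hk : 0 < k) (hkτ : (k : ℝ) = (1 - τ) * m)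
    (U : Matrix (Fin m) (Fin n) ℝ) (y : Fin m → ℝ) (x : Fin n → ℝ) :
    (⨅ x₀ : ℝ, (1 / (m : ℝ)) * ∑ i, tiltedL1 τ (y i - (∑ j, U i j * x j) - x₀))
      = (1 - τ) *
        ((∑ j, x j * ((1 / (m : ℝ)) * ∑ i, U i j)) - (1 / (m : ℝ)) * ∑ i, y i
          + cvar τ (fun i => y i - ∑ j, U i j * x j)) := by
  have hm0 : (0:ℝ) < m := by exact_mod_cast hm
  have hτ' : (0:ℝ) < 1 - τ := by linarith
  set z : Fin m → ℝ := fun i => y i - ∑ j, U i j * x j with hz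
  set g : ℝ → ℝ := fun α => α + (1 / ((1 - τ) * m)) * ∑ i, max (z i - α) 0 with hgdef
  set C : ℝ := (1 - τ) *
      ((∑ j, x j * ((1 / (m : ℝ)) * ∑ i, U i j)) - (1 / (m : ℝ)) * ∑ i, y i) with hCdef
  -- rewrite the "mean" part
  have hswap : ∑ j, x j * ((1 / (m:ℝ)) * ∑ i, U i j)
      = (1 / (m:ℝ)) * ∑ i, ∑ j, U i j * x j := by
    calc ∑ j, x j * ((1 / (m:ℝ)) * ∑ i, U i j)
        = ∑ j, ∑ i, (1 / (m:ℝ)) * (U i j * x j) := by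
          refine Finset.sum_congr rfl fun j _ => ?_
          rw [Finset.mul_sum, Finset.mul_sum]
          exact Finset.sum_congr rfl fun i _ => by ring
      _ = ∑ i, ∑ j, (1 / (m:ℝ)) * (U i j * x j) := Finset.sum_comm
      _ = (1 / (m:ℝ)) * ∑ i, ∑ j, U i j * x j := by
          rw [Finset.mul_sum]
          exact Finset.sum_congr rfl fun i _ => (Finset.mul_sum _ _ _).symm
  have hzsum : ∑ i, z i = ∑ i, y i - ∑ i, ∑ j, U i j * x j := by
    simp only [hz]; rw [Finset.sum_sub_distrib]
  have hCz : C = -((1 - τ) * ((1 / (m:ℝ)) * ∑ i, z i)) := by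
    rw [hCdef, hswap, hzsum]; ring
  -- tilted ℓ₁ identity
  have hrho : ∀ w : ℝ, tiltedL1 τ w = max w 0 - (1 - τ) * w := by
    intro w
    have hmax : max (-w) 0 = max w 0 - w := by
      rcases le_total w 0 with h | h
      · rw [max_eq_left (neg_nonneg.mpr h), max_eq_right h]; ring
      · rw [max_eq_right (neg_nonpos.mpr h), max_eq_left h]; ring
    rw [tiltedL1, hmax]; ring
  -- pointwise identity for the objective
  have hpt : ∀ α : ℝ, (1 / (m:ℝ)) * ∑ i, tiltedL1 τ (z i - α) = C + (1 - τ) * g α := by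
    intro α
    have hsum : ∑ i, tiltedL1 τ (z i - α)
        = (∑ i, max (z i - α) 0) - (1 - τ) * ((∑ i, z i) - m * α) := by
      simp only [hrho]
      rw [Finset.sum_sub_distrib]
      congr 1
      rw [← Finset.mul_sum]
      congr 1
      rw [Finset.sum_sub_distrib]
      simp [Finset.sum_const, Finset.card_univ, mul_comm]
    rw [hsum, hCz, hgdef]
    have hne : (m:ℝ) ≠ 0 := ne_of_gt hm0
    have hne2 : (1 - τ) ≠ 0 := ne_of_gt hτ'
    field_simp
    ring
  -- g is bounded below
  have hbdd : BddBelow (Set.range g) := by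
    refine ⟨min 0 ((∑ i, z i) / ((1 - τ) * m)), ?_⟩
    rintro v ⟨α, rfl⟩
    have hc : (0:ℝ) < 1 / ((1 - τ) * m) := by positivity
    rcases le_total 0 α with h | h
    · have h1 : 0 ≤ ∑ i, max (z i - α) 0 :=
        Finset.sum_nonneg fun i _ => le_max_right _ _
      have : min 0 ((∑ i, z i) / ((1 - τ) * m)) ≤ 0 := min_le_left _ _
      have := mul_nonneg hc.le h1
      simp only [hgdef]
      linarith
    · have h1 : (∑ i, z i) - m * α ≤ ∑ i, max (z i - α) 0 := by
        have := Finset.sum_le_sum (f := fun i => z i - α)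
          (g := fun i => max (z i - α) 0) (s := Finset.univ)
          (fun i _ => le_max_left _ _)
        rw [Finset.sum_sub_distrib] at this
        simpa [Finset.sum_const, mul_comm] using this
      have h2 : α + (1 / ((1 - τ) * m)) * ((∑ i, z i) - m * α)
          ≤ α + (1 / ((1 - τ) * m)) * ∑ i, max (z i - α) 0 := by
        have := mul_le_mul_of_nonneg_left h1 hc.le
        linarith
      have h3 : (∑ i, z i) / ((1 - τ) * m)
          ≤ α + (1 / ((1 - τ) * m)) * ((∑ i, z i) - m * α) := by
        have key : α + (1 / ((1 - τ) * m)) * ((∑ i, z i) - m * α)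
            - (∑ i, z i) / ((1 - τ) * m) = α * (-τ / (1 - τ)) := by
          field_simp
          ring
        have h4 : 0 ≤ (-α) * (τ / (1 - τ)) := mul_nonneg (by linarith) (by positivity)
        have h5 : α * (-τ / (1 - τ)) = (-α) * (τ / (1 - τ)) := by ring
        linarith
      have : min 0 ((∑ i, z i) / ((1 - τ) * m)) ≤ (∑ i, z i) / ((1 - τ) * m) :=
        min_le_right _ _
      simp only [hgdef]
      linarith
  -- bounded below after scaling
  have hbdd2 : BddBelow (Set.range fun α => (1 - τ) * g α) := by
    obtain ⟨L, hL⟩ := hbdd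
    refine ⟨(1 - τ) * L, ?_⟩
    rintro v ⟨α, rfl⟩
    exact mul_le_mul_of_nonneg_left (hL ⟨α, rfl⟩) hτ'.le
  have hobj : (fun x₀ : ℝ => (1 / (m : ℝ)) *
      ∑ i, tiltedL1 τ (y i - (∑ j, U i j * x j) - x₀)) = fun α => C + (1 - τ) * g α := by
    funext α
    exact hpt α
  rw [hobj]
  have hcv : cvar τ (fun i => y i - ∑ j, U i j * x j) = ⨅ α, g α := rfl
  have step : (⨅ α : ℝ, C + (1 - τ) * g α) = C + (1 - τ) * ⨅ α, g α := by
    rw [Real.mul_iInf_of_nonneg hτ'.le]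
    have := (OrderIso.addLeft C).map_ciInf hbdd2
    simpa using this.symm
  rw [step, hcv, hCdef]
  ring
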